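/- Let T be a trek with consecutively numbered nodes and Σ(ζ) the matrix with (i,j) entry Σ_T binom(ℓ+r,ℓ) ζ^{ℓ+r} over treks T from i to j. Let i ≠ j be nodes with shortest trek of length (ℓ, r), and K ⊆ V(T) ∖ {i,j}. Then the polynomial det(Σ(ζ)_{iK, jK}) is either identically zero or its lowest-degree non-zero term has degree at least ℓ + r. Moreover, if i and j are adjacent in T, then the lowest-degree term equals ζ (with Σ_{iK,jK} formed with rows and columns ordered consistently by the node numbering). -/

import Mathlib

open Matrix Polynomial

/-- The covariance matrix `Σ(ζ)` of the trek graph with nodes `0, …, n-1`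
numbered consecutively from the left leaf through the top node `t` to the
right leaf: the `(i,j)` entry is `Σ_T binom(ℓ+r, ℓ) ζ^{ℓ+r}`, summed over all
`(ℓ,r)`-treks from `i` to `j` (treks correspond to common ancestors `s`, with
branch lengths `ℓ = dist(s,i)`, `r = dist(s,j)`). -/
noncomputable def trekSigma (n t : ℕ) : Matrix (Fin n) (Fin n) (Polynomial ℝ) :=
  Matrix.of fun i j =>
    ∑ s : Fin n,
      if (((i : ℕ) ≤ (s : ℕ) ∧ (s : ℕ) ≤ t) ∨ (t ≤ (s : ℕ) ∧ (s : ℕ) ≤ (i : ℕ))) ∧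
          (((j : ℕ) ≤ (s : ℕ) ∧ (s : ℕ) ≤ t) ∨ (t ≤ (s : ℕ) ∧ (s : ℕ) ≤ (j : ℕ))) then
        Polynomial.C ((Nat.dist (s : ℕ) (i : ℕ) + Nat.dist (s : ℕ) (j : ℕ)).choose
            (Nat.dist (s : ℕ) (i : ℕ)) : ℝ) *
          Polynomial.X ^ (Nat.dist (s : ℕ) (i : ℕ) + Nat.dist (s : ℕ) (j : ℕ))
      else 0

/-- The minor of `S` with rows indexed by the finset `R` and columns by the
finset `C` (of equal cardinality), rows and columns taken in increasing
order. -/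
noncomputable def finMinor {ι R' : Type*} [Fintype ι] [LinearOrder ι] [CommRing R']
    (S : Matrix ι ι R') (R C : Finset ι) (h : R.card = C.card) : R' :=
  (S.submatrix (fun a : Fin R.card => ((R.orderIsoOfFin rfl a : R) : ι))
    (fun b : Fin R.card => ((C.orderIsoOfFin h.symm b : C) : ι))).det


lemma coeff_trekSigma_lt (n t : ℕ) (i j : Fin n) (e : ℕ) (he : e < Nat.dist (i:ℕ) (j:ℕ)) :
    (trekSigma n t i j).coeff e = 0 := by
  unfold trekSigma
  rw [Matrix.of_apply, Polynomial.finset_sum_coeff]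
  refine Finset.sum_eq_zero fun s _ => ?_
  split_ifs with h
  · rw [Polynomial.coeff_C_mul, Polynomial.coeff_X_pow, if_neg, mul_zero]
    have h3 := Nat.dist.triangle_inequality (i:ℕ) (s:ℕ) (j:ℕ)
    rw [Nat.dist_comm (i:ℕ) (s:ℕ)] at h3
    omega
  · simp

lemma coeff_trekSigma_diag (n t : ℕ) (k : Fin n) : (trekSigma n t k k).coeff 0 = 1 := by
  unfold trekSigma
  rw [Matrix.of_apply, Polynomial.finset_sum_coeff]
  rw [Finset.sum_eq_single k]
  · have : ((k:ℕ) ≤ (k:ℕ) ∧ (k:ℕ) ≤ t) ∨ (t ≤ (k:ℕ) ∧ (k:ℕ) ≤ (k:ℕ)) := by omega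
    rw [if_pos ⟨this, this⟩]
    simp
  · intro s _ hs
    split_ifs with h
    · rw [Polynomial.coeff_C_mul, Polynomial.coeff_X_pow, if_neg, mul_zero]
      have : Nat.dist (s:ℕ) (k:ℕ) ≠ 0 := by
        simp [Nat.dist]
        intro h1 h2
        exact hs (Fin.ext (by omega))
      omega
    · simp
  · simp

lemma coeff_trekSigma_adj (n t : ℕ) (i j : Fin n) (h : Nat.dist (i:ℕ) (j:ℕ) = 1) :
    (trekSigma n t i j).coeff 1 = 1 := by
  have hij : i ≠ j := by intro hh; rw [hh] at h; simp [Nat.dist] at h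
  have key : ∀ s : Fin n, s ≠ i → s ≠ j →
      (if (((i : ℕ) ≤ (s : ℕ) ∧ (s : ℕ) ≤ t) ∨ (t ≤ (s : ℕ) ∧ (s : ℕ) ≤ (i : ℕ))) ∧
          (((j : ℕ) ≤ (s : ℕ) ∧ (s : ℕ) ≤ t) ∨ (t ≤ (s : ℕ) ∧ (s : ℕ) ≤ (j : ℕ))) then
        Polynomial.C ((Nat.dist (s : ℕ) (i : ℕ) + Nat.dist (s : ℕ) (j : ℕ)).choose
            (Nat.dist (s : ℕ) (i : ℕ)) : ℝ) *
          Polynomial.X ^ (Nat.dist (s : ℕ) (i : ℕ) + Nat.dist (s : ℕ) (j : ℕ))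
      else 0).coeff 1 = 0 := by
    intro s hsi hsj
    split_ifs with hc
    · rw [Polynomial.coeff_C_mul, Polynomial.coeff_X_pow, if_neg, mul_zero]
      have h1 : Nat.dist (s:ℕ) (i:ℕ) ≠ 0 := by
        simp only [Nat.dist, ne_eq]; intro hz
        exact hsi (Fin.ext (by omega))
      have h2 : Nat.dist (s:ℕ) (j:ℕ) ≠ 0 := by
        simp only [Nat.dist, ne_eq]; intro hz
        exact hsj (Fin.ext (by omega))
      omega
    · simp
  unfold trekSigma
  rw [Matrix.of_apply, Polynomial.finset_sum_coeff]
  rw [← Finset.sum_subset (Finset.subset_univ ({i, j} : Finset (Fin n)))]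
  · rw [Finset.sum_pair hij]
    have hdii : Nat.dist (i:ℕ) (i:ℕ) = 0 := Nat.dist_self _
    have hdjj : Nat.dist (j:ℕ) (j:ℕ) = 0 := Nat.dist_self _
    have hdji : Nat.dist (j:ℕ) (i:ℕ) = 1 := by rw [Nat.dist_comm]; exact h
    rw [hdii, hdjj, hdji, h]
    have hval : ∀ (P : Prop) [Decidable P] (c : ℝ),
        (if P then Polynomial.C c * Polynomial.X ^ 1 else 0).coeff 1 = if P then c else 0 := by
      intro P _ c; split_ifs <;> simp
    rw [show (0:ℕ) + 1 = 1 from rfl, hval, hval]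
    rw [Nat.choose_zero_right, Nat.choose_self]
    have hd : (i:ℕ) + 1 = (j:ℕ) ∨ (j:ℕ) + 1 = (i:ℕ) := by simp [Nat.dist] at h; omega
    have hi := i.isLt
    have hj := j.isLt
    split_ifs with h1 h2 h2
    · exfalso; omega
    · norm_num
    · norm_num
    · exfalso; omega
  · intro s _ hs
    simp only [Finset.mem_insert, Finset.mem_singleton, not_or] at hs
    exact key s hs.1 hs.2


lemma coeff_prod_eq_zero {α : Type*} [DecidableEq α] (s : Finset α) (f : α → Polynomial ℝ)
    (d : α → ℕ) (hf : ∀ a ∈ s, ∀ e < d a, (f a).coeff e = 0) :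
    ∀ e < ∑ a ∈ s, d a, (∏ a ∈ s, f a).coeff e = 0 := by
  induction s using Finset.induction_on with
  | empty => intro e he; simp at he
  | @insert a s ha ih =>
    intro e he
    rw [Finset.prod_insert ha, Polynomial.coeff_mul]
    refine Finset.sum_eq_zero fun p hp => ?_
    rw [Finset.HasAntidiagonal.mem_antidiagonal] at hp
    rw [Finset.sum_insert ha] at he
    by_cases hk : p.1 < d a
    · rw [hf a (Finset.mem_insert_self a s) p.1 hk, zero_mul]
    · rw [ih (fun b hb => hf b (Finset.mem_insert_of_mem hb)) p.2 (by omega), mul_zero]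


lemma nat_dist_natAbs (a b : ℕ) : Nat.dist a b = ((a:ℤ) - b).natAbs := by
  simp [Nat.dist]; omega

lemma sum_dist_ge {n m : ℕ} (ρ γ : Fin m → Fin n) (i j : Fin n)
    (h : (∑ a : Fin m, ((ρ a : ℕ) : ℤ)) - ∑ a : Fin m, ((γ a : ℕ) : ℤ)
        = ((i:ℕ):ℤ) - ((j:ℕ):ℤ)) :
    Nat.dist (i:ℕ) (j:ℕ) ≤ ∑ a : Fin m, Nat.dist (ρ a : ℕ) (γ a : ℕ) := by
  have key : ((Nat.dist (i:ℕ) (j:ℕ) : ℕ) : ℤ)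
      ≤ ((∑ a : Fin m, Nat.dist (ρ a : ℕ) (γ a : ℕ) : ℕ) : ℤ) := by
    calc ((Nat.dist (i:ℕ) (j:ℕ) : ℕ) : ℤ) = |((i:ℕ):ℤ) - ((j:ℕ):ℤ)| := by
          rw [nat_dist_natAbs]; exact_mod_cast (Int.abs_eq_natAbs _).symm
      _ = |∑ a : Fin m, (((ρ a : ℕ):ℤ) - ((γ a : ℕ):ℤ))| := by
          rw [Finset.sum_sub_distrib, h]
      _ ≤ ∑ a : Fin m, |((ρ a : ℕ):ℤ) - ((γ a : ℕ):ℤ)| := Finset.abs_sum_le_sum_abs _ _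
      _ = ((∑ a : Fin m, Nat.dist (ρ a : ℕ) (γ a : ℕ) : ℕ) : ℤ) := by
          push_cast
          refine Finset.sum_congr rfl fun a _ => ?_
          rw [nat_dist_natAbs]; exact_mod_cast Int.abs_eq_natAbs _
  exact_mod_cast key

lemma sum_orderIso {n k : ℕ} (R : Finset (Fin n)) (h : R.card = k) :
    (∑ a : Fin k, ((((R.orderIsoOfFin h a : R) : Fin n) : ℕ) : ℤ))
      = ∑ x ∈ R, ((x : ℕ) : ℤ) := by
  rw [← Finset.sum_coe_sort R (fun x => ((x : ℕ) : ℤ))]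
  exact Equiv.sum_comp (R.orderIsoOfFin h).toEquiv (fun x : R => (((x : Fin n) : ℕ) : ℤ))

lemma one_le_dist {n : ℕ} {x y : Fin n} (h : x ≠ y) : 1 ≤ Nat.dist (x:ℕ) (y:ℕ) := by
  have : (x:ℕ) ≠ (y:ℕ) := fun hh => h (Fin.ext hh)
  simp [Nat.dist]; omega

lemma coeff_mul_one' (p q : Polynomial ℝ) :
    (p*q).coeff 1 = p.coeff 0 * q.coeff 1 + p.coeff 1 * q.coeff 0 := by
  rw [Polynomial.coeff_mul]
  rw [show (Finset.HasAntidiagonal.antidiagonal 1 : Finset (ℕ×ℕ)) = {(0,1),(1,0)} from rfl]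
  simp

lemma det_coeff_lt {n m : ℕ} (t : ℕ) (i j : Fin n) (ρ γ : Fin m → Fin n)
    (hsum : (∑ a : Fin m, ((ρ a : ℕ) : ℤ)) - ∑ a : Fin m, ((γ a : ℕ) : ℤ)
        = ((i:ℕ):ℤ) - ((j:ℕ):ℤ))
    (e : ℕ) (he : e < Nat.dist (i:ℕ) (j:ℕ)) :
    ((Matrix.of fun a b => trekSigma n t (ρ a) (γ b)).det).coeff e = 0 := by
  rw [Matrix.det_apply, Polynomial.finset_sum_coeff]
  refine Finset.sum_eq_zero fun σ _ => ?_
  rw [Polynomial.coeff_smul]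
  have hsum' : Nat.dist (i:ℕ) (j:ℕ) ≤ ∑ a : Fin m, Nat.dist (ρ (σ a) : ℕ) (γ a : ℕ) := by
    apply sum_dist_ge (fun a => ρ (σ a)) γ
    rw [Equiv.sum_comp σ (fun a => ((ρ a : ℕ) : ℤ))]
    exact hsum
  have hz := coeff_prod_eq_zero Finset.univ (fun a => trekSigma n t (ρ (σ a)) (γ a))
    (fun a => Nat.dist (ρ (σ a) : ℕ) (γ a : ℕ))
    (fun a _ e' he' => coeff_trekSigma_lt n t _ _ e' he') e (lt_of_lt_of_le he hsum')
  calc (Equiv.Perm.sign σ) • (∏ a, Matrix.of (fun a b => trekSigma n t (ρ a) (γ b)) (σ a) a).coeff e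
      = (Equiv.Perm.sign σ) • (∏ a, trekSigma n t (ρ (σ a)) (γ a)).coeff e := rfl
    _ = 0 := by rw [hz, smul_zero]

lemma det_coeff_one {n m : ℕ} (t : ℕ) (i j : Fin n) (ρ γ : Fin m → Fin n)
    (hρinj : Function.Injective ρ)
    (a0 : Fin m) (hρa0 : ρ a0 = i)
    (hγ : ∀ a, γ a = if ρ a = i then j else ρ a)
    (hjρ : ∀ a, ρ a ≠ j)
    (hd : Nat.dist (i:ℕ) (j:ℕ) = 1) :
    ((Matrix.of fun a b => trekSigma n t (ρ a) (γ b)).det).coeff 1 = 1 := by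
  classical
  rw [Matrix.det_apply, Polynomial.finset_sum_coeff]
  have hγa0 : γ a0 = j := by rw [hγ, if_pos hρa0]
  have hγne : ∀ a, a ≠ a0 → γ a = ρ a := by
    intro a ha
    rw [hγ, if_neg]
    intro hh
    exact ha (hρinj (hh.trans hρa0.symm))
  rw [Finset.sum_eq_single (1 : Equiv.Perm (Fin m))]
  · rw [Equiv.Perm.sign_one, one_smul]
    have hprod : (∏ a, Matrix.of (fun a b => trekSigma n t (ρ a) (γ b)) ((1 : Equiv.Perm (Fin m)) a) a)
        = trekSigma n t i j * ∏ a ∈ Finset.univ.erase a0, trekSigma n t (ρ a) (ρ a) := by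
      rw [← Finset.mul_prod_erase Finset.univ _ (Finset.mem_univ a0)]
      congr 1
      · show trekSigma n t (ρ a0) (γ a0) = trekSigma n t i j
        rw [hρa0, hγa0]
      · refine Finset.prod_congr rfl fun a ha => ?_
        show trekSigma n t (ρ a) (γ a) = trekSigma n t (ρ a) (ρ a)
        rw [hγne a (Finset.ne_of_mem_erase ha)]
    rw [hprod, coeff_mul_one']
    rw [coeff_trekSigma_lt n t i j 0 (by omega), coeff_trekSigma_adj n t i j hd]
    have hq0 : (∏ a ∈ Finset.univ.erase a0, trekSigma n t (ρ a) (ρ a)).coeff 0 = 1 := by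
      have : (∏ a ∈ Finset.univ.erase a0, trekSigma n t (ρ a) (ρ a)).coeff 0
          = ∏ a ∈ Finset.univ.erase a0, (trekSigma n t (ρ a) (ρ a)).coeff 0 := by
        simp only [← Polynomial.constantCoeff_apply, map_prod]
      rw [this]
      exact Finset.prod_eq_one fun a _ => coeff_trekSigma_diag n t (ρ a)
    rw [hq0]
    ring
  · intro σ _ hσ
    rw [Polynomial.coeff_smul]
    -- the sum of distances is at least 2
    obtain ⟨b0, hb0⟩ : ∃ b, σ b ≠ b := by
      by_contra hc
      push_neg at hc
      exact hσ (Equiv.ext hc)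
    obtain ⟨b, hbne, hba0⟩ : ∃ b, σ b ≠ b ∧ b ≠ a0 := by
      by_cases hb : b0 = a0
      · subst hb
        exact ⟨σ b0, fun hh => hb0 (σ.injective hh), hb0⟩
      · exact ⟨b0, hb0, hb⟩
    have h2 : 2 ≤ ∑ a : Fin m, Nat.dist (ρ (σ a) : ℕ) (γ a : ℕ) := by
      have hsub : ({a0, b} : Finset (Fin m)) ⊆ Finset.univ := Finset.subset_univ _
      have hpair : ∑ a ∈ ({a0, b} : Finset (Fin m)), Nat.dist (ρ (σ a) : ℕ) (γ a : ℕ)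
          ≤ ∑ a : Fin m, Nat.dist (ρ (σ a) : ℕ) (γ a : ℕ) :=
        Finset.sum_le_sum_of_subset hsub
      rw [Finset.sum_pair (Ne.symm hba0)] at hpair
      have ht1 : 1 ≤ Nat.dist (ρ (σ a0) : ℕ) (γ a0 : ℕ) := by
        rw [hγa0]; exact one_le_dist (hjρ _)
      have ht2 : 1 ≤ Nat.dist (ρ (σ b) : ℕ) (γ b : ℕ) := by
        rw [hγne b hba0]
        exact one_le_dist (fun hh => hbne (hρinj hh))
      omega
    have hz := coeff_prod_eq_zero Finset.univ (fun a => trekSigma n t (ρ (σ a)) (γ a))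
      (fun a => Nat.dist (ρ (σ a) : ℕ) (γ a : ℕ))
      (fun a _ e' he' => coeff_trekSigma_lt n t _ _ e' he') 1 (by omega)
    calc (Equiv.Perm.sign σ) • (∏ a, Matrix.of (fun a b => trekSigma n t (ρ a) (γ b)) (σ a) a).coeff 1
        = (Equiv.Perm.sign σ) • (∏ a, trekSigma n t (ρ (σ a)) (γ a)).coeff 1 := rfl
      _ = 0 := by rw [hz, smul_zero]
  · intro h
    exact absurd (Finset.mem_univ _) h

section Minor

variable {n : ℕ} (t : ℕ) (i j : Fin n) (K : Finset (Fin n))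

lemma minor_coeff_lt (hiK : i ∉ K) (hjK : j ∉ K)
    (h : (insert i K).card = (insert j K).card) (e : ℕ) (he : e < Nat.dist (i:ℕ) (j:ℕ)) :
    (finMinor (trekSigma n t) (insert i K) (insert j K) h).coeff e = 0 := by
  apply det_coeff_lt t i j
    (fun a => (((insert i K).orderIsoOfFin rfl a : (insert i K : Finset (Fin n))) : Fin n))
    (fun b => (((insert j K).orderIsoOfFin h.symm b : (insert j K : Finset (Fin n))) : Fin n))
    ?_ e he
  rw [sum_orderIso (insert i K) rfl, sum_orderIso (insert j K) h.symm,
    Finset.sum_insert hiK, Finset.sum_insert hjK]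
  ring

lemma minor_coeff_one (hij : i ≠ j) (hiK : i ∉ K) (hjK : j ∉ K)
    (h : (insert i K).card = (insert j K).card) (hd : Nat.dist (i:ℕ) (j:ℕ) = 1) :
    (finMinor (trekSigma n t) (insert i K) (insert j K) h).coeff 1 = 1 := by
  classical
  set R : Finset (Fin n) := insert i K with hR
  set C : Finset (Fin n) := insert j K with hC
  have hjR : j ∉ R := by
    simp only [hR, Finset.mem_insert, not_or]
    exact ⟨hij.symm, hjK⟩
  -- the row map is the order embedding
  have hρemb : ∀ a : Fin R.card, ((R.orderIsoOfFin rfl a : R) : Fin n) = R.orderEmbOfFin rfl a :=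
    fun a => Finset.coe_orderIsoOfFin_apply R rfl a
  have hρmono : StrictMono (fun a : Fin R.card => ((R.orderIsoOfFin rfl a : R) : Fin n)) := by
    have := (R.orderEmbOfFin rfl).strictMono
    intro a b hab
    show ((R.orderIsoOfFin rfl a : R) : Fin n) < ((R.orderIsoOfFin rfl b : R) : Fin n)
    rw [hρemb, hρemb]
    exact this hab
  have hρinj := hρmono.injective
  have hρmem : ∀ a, ((R.orderIsoOfFin rfl a : R) : Fin n) ∈ R := fun a => (R.orderIsoOfFin rfl a).2
  have hjρ : ∀ a, ((R.orderIsoOfFin rfl a : R) : Fin n) ≠ j := fun a hh => hjR (hh ▸ hρmem a)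
  -- there is an index mapping to i
  obtain ⟨a0, ha0⟩ : ∃ a0 : Fin R.card, ((R.orderIsoOfFin rfl a0 : R) : Fin n) = i := by
    have hi : i ∈ R := Finset.mem_insert_self i K
    have := Finset.range_orderEmbOfFin R (rfl : R.card = R.card)
    have hmem : i ∈ Set.range (R.orderEmbOfFin rfl) := by rw [this]; exact hi
    obtain ⟨a0, ha0⟩ := hmem
    exact ⟨a0, by rw [hρemb]; exact ha0⟩
  -- the column map equals the modified row map
  have hdcase : (i:ℕ) + 1 = (j:ℕ) ∨ (j:ℕ) + 1 = (i:ℕ) := by simp [Nat.dist] at hd; omega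
  have hγ : ∀ b : Fin R.card, ((C.orderIsoOfFin h.symm b : C) : Fin n)
      = if ((R.orderIsoOfFin rfl b : R) : Fin n) = i then j
        else ((R.orderIsoOfFin rfl b : R) : Fin n) := by
    have hCcard : C.card = R.card := h.symm
    set f : Fin R.card → Fin n := fun b =>
      if ((R.orderIsoOfFin rfl b : R) : Fin n) = i then j
      else ((R.orderIsoOfFin rfl b : R) : Fin n) with hf
    have hfs : ∀ b, f b ∈ C := by
      intro b
      show (if ((R.orderIsoOfFin rfl b : R) : Fin n) = i then j
        else ((R.orderIsoOfFin rfl b : R) : Fin n)) ∈ C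
      split_ifs with hb
      · exact Finset.mem_insert_self j K
      · rcases Finset.mem_insert.mp (hρmem b) with h1 | h1
        · exact absurd h1 hb
        · exact Finset.mem_insert_of_mem h1
    have hKne : ∀ x : Fin n, x ∈ K → x ≠ j := fun x hx hh => hjK (hh ▸ hx)
    have hmono : StrictMono f := by
      intro a b hab
      have hxy := hρmono hab
      set x := ((R.orderIsoOfFin rfl a : R) : Fin n)
      set y := ((R.orderIsoOfFin rfl b : R) : Fin n)
      have hxR := hρmem a
      have hyR := hρmem b
      show (if x = i then j else x) < (if y = i then j else y)
      split_ifs with h1 h2 h2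
      · exact absurd (h1.trans h2.symm) (ne_of_lt hxy)
      · -- x = i, goal j < y
        have hyK : y ∈ K := by
          rcases Finset.mem_insert.mp hyR with hh | hh
          · exact absurd hh h2
          · exact hh
        have hyj : (y:ℕ) ≠ (j:ℕ) := fun hh => hKne y hyK (Fin.ext hh)
        have : (x:ℕ) < (y:ℕ) := hxy
        rw [Fin.lt_def]
        have hxi : (x:ℕ) = (i:ℕ) := congrArg Fin.val h1
        omega
      · -- y = i, goal x < j
        have hxK : x ∈ K := by
          rcases Finset.mem_insert.mp hxR with hh | hh
          · exact absurd hh h1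
          · exact hh
        have hxj : (x:ℕ) ≠ (j:ℕ) := fun hh => hKne x hxK (Fin.ext hh)
        have : (x:ℕ) < (y:ℕ) := hxy
        rw [Fin.lt_def]
        have hyi : (y:ℕ) = (i:ℕ) := congrArg Fin.val h2
        omega
      · exact hxy
    have huniq := Finset.orderEmbOfFin_unique (f := f) hCcard hfs hmono
    intro b
    have h1 : ((C.orderIsoOfFin h.symm b : C) : Fin n) = C.orderEmbOfFin hCcard b :=
      Finset.coe_orderIsoOfFin_apply C hCcard b
    rw [h1, ← huniq, hf]
  exact det_coeff_one t i j _ _ hρinj a0 ha0 hγ hjρ hd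

end Minor


/-- For distinct nodes `i ≠ j` on a trek whose shortest trek between them has
total length `ℓ + r = dist(i,j)` (in the consecutive numbering), the minor
`det Σ(ζ)_{iK,jK}` is either identically zero or its lowest-degree term has
degree at least `ℓ + r`; if `i` and `j` are adjacent, the lowest-degree term
equals `ζ`. -/
theorem trek_minor_lowest_degree (n t : ℕ) (ht : t < n) (i j : Fin n) (hij : i ≠ j)
    (K : Finset (Fin n)) (hiK : i ∉ K) (hjK : j ∉ K) :
    (finMinor (trekSigma n t) (insert i K) (insert j K)
        (by rw [Finset.card_insert_of_notMem hiK, Finset.card_insert_of_notMem hjK]) = 0 ∨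
      Nat.dist (i : ℕ) (j : ℕ) ≤
        (finMinor (trekSigma n t) (insert i K) (insert j K)
          (by rw [Finset.card_insert_of_notMem hiK,
            Finset.card_insert_of_notMem hjK])).natTrailingDegree) ∧
    (Nat.dist (i : ℕ) (j : ℕ) = 1 →
      (finMinor (trekSigma n t) (insert i K) (insert j K)
          (by rw [Finset.card_insert_of_notMem hiK,
            Finset.card_insert_of_notMem hjK])).natTrailingDegree = 1 ∧
        (finMinor (trekSigma n t) (insert i K) (insert j K)
          (by rw [Finset.card_insert_of_notMem hiK,
            Finset.card_insert_of_notMem hjK])).trailingCoeff = 1) := by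
  have hcard : (insert i K).card = (insert j K).card := by
    rw [Finset.card_insert_of_notMem hiK, Finset.card_insert_of_notMem hjK]
  set M := finMinor (trekSigma n t) (insert i K) (insert j K) hcard with hM
  have hvanish : ∀ e < Nat.dist (i:ℕ) (j:ℕ), M.coeff e = 0 :=
    fun e he => minor_coeff_lt t i j K hiK hjK hcard e he
  constructor
  · by_cases h0 : M = 0
    · exact Or.inl h0
    · exact Or.inr (Polynomial.le_natTrailingDegree h0 hvanish)
  · intro hd
    have hc1 : M.coeff 1 = 1 := minor_coeff_one t i j K hij hiK hjK hcard hd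
    have hne : M ≠ 0 := fun h0 => by rw [h0] at hc1; simp at hc1
    have hge : 1 ≤ M.natTrailingDegree :=
      Polynomial.le_natTrailingDegree hne (fun e he => hvanish e (by omega))
    have hle : M.natTrailingDegree ≤ 1 :=
      Polynomial.natTrailingDegree_le_of_ne_zero (by rw [hc1]; exact one_ne_zero)
    have hnt : M.natTrailingDegree = 1 := le_antisymm hle hge
    refine ⟨hnt, ?_⟩
    rw [Polynomial.trailingCoeff, hnt, hc1]
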